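/- Let C be the ℤ-graded chain complex with generators Ω^k ⊗ 1_θ in degree 2k for all k ∈ ℤ, together with, for each a in a finite set S graded by gr : S → ℤ, generators Ω^k ⊗ η_a in degree 2k + gr(a) and Ω^k ⊗ 1_a in degree 2k + gr(a) + 1 (k ∈ ℤ), with differential D as in the equivariant Seiberg–Witten–Floer complex. Suppose the coefficient identities (n·n = 0 and the n·m − m·n relations) hold, so that D² = 0. Then the homology of C is isomorphic to ℤ[Ω, Ω⁻¹]; more precisely, H_j(C) ≅ ℤ if j is even and H_j(C) = 0 if j is odd, with the degree-2k class represented by Ω^k ⊗ 1_θ. -/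

import Mathlib

/-! Core definitions modelling the equivariant Seiberg–Witten–Floer complex
`CF^{SW,∞}_{*,U(1)}(Y,𝔰)`.  `S` is the (finite) set of irreducible monopoles,
`gr` the relative grading, `n a b` the counts of flowlines between irreducibles,
`m a c` the relative Euler numbers, `nth a = n_{aθ}` and `thn d = n_{θd}` the
counts involving the reducible θ. -/
inductive Gen (S : Type) : Type
  | eta : ℤ → S → Gen S
  | one : ℤ → S → Gen S
  | theta : ℤ → Gen S

namespace Gen

variable {S : Type} [Fintype S]

/-- The underlying ℤ-module of `CF^{SW,∞}`. -/
abbrev CF (S : Type) := Gen S →₀ ℤ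

/-- The power of Ω carried by a generator. -/
def kpow : Gen S → ℤ
  | eta k _ => k
  | one k _ => k
  | theta k => k

/-- The degree of a generator: `deg (Ω^k ⊗ η_a) = 2k + gr a`,
`deg (Ω^k ⊗ 1_a) = 2k + gr a + 1`, `deg (Ω^k ⊗ 1_θ) = 2k`. -/
def deg (gr : S → ℤ) : Gen S → ℤ
  | eta k a => 2 * k + gr a
  | one k a => 2 * k + gr a + 1
  | theta k => 2 * k

/-- The differential on generators. -/
noncomputable def Dgen (gr : S → ℤ) (n m : S → S → ℤ) (nth thn : S → ℤ) : Gen S → CF S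
  | eta k a =>
      (∑ b : S, Finsupp.single (eta k b) (if gr a - gr b = 1 then n a b else 0))
        + (∑ c : S, Finsupp.single (one k c) (if gr a - gr c = 2 then m a c else 0))
        - Finsupp.single (one (k - 1) a) 1
        + Finsupp.single (theta k) (if gr a = 1 then nth a else 0)
  | one k a => -∑ b : S, Finsupp.single (one k b) (if gr a - gr b = 1 then n a b else 0)
  | theta k => ∑ d : S, Finsupp.single (eta k d) (if gr d = -2 then thn d else 0)

/-- The differential `D` of `CF^{SW,∞}`. -/
noncomputable def Dop (gr : S → ℤ) (n m : S → S → ℤ) (nth thn : S → ℤ) :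
    CF S →ₗ[ℤ] CF S :=
  Finsupp.lift (CF S) ℤ (Gen S) (Dgen gr n m nth thn)

end Gen

namespace Gen

variable {S : Type} [Fintype S]

/-- The submodule of degree-`j` cycles of `CF^{SW,∞}`. -/
noncomputable def Zc (gr : S → ℤ) (n m : S → S → ℤ) (nth thn : S → ℤ) (j : ℤ) :
    Submodule ℤ (CF S) :=
  Finsupp.supported ℤ ℤ {g : Gen S | deg gr g = j} ⊓ LinearMap.ker (Dop gr n m nth thn)

/-- The submodule of degree-`j` boundaries of `CF^{SW,∞}`. -/
noncomputable def Bc (gr : S → ℤ) (n m : S → S → ℤ) (nth thn : S → ℤ) (j : ℤ) :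
    Submodule ℤ (CF S) :=
  Submodule.map (Dop gr n m nth thn) (Finsupp.supported ℤ ℤ {g : Gen S | deg gr g = j + 1})

set_option linter.unusedSectionVars false

section Aux
variable {S : Type} [Fintype S] (gr : S → ℤ) (n m : S → S → ℤ) (nth thn : S → ℤ)

omit [Fintype S] in
lemma lift_single (f : Gen S → CF S) (g : Gen S) (c : ℤ) :
    Finsupp.lift (CF S) ℤ (Gen S) f (Finsupp.single g c) = c • f g := by
  simp [Finsupp.lift_apply, Finsupp.sum_single_index]

omit [Fintype S] in
lemma lift_supported (f : Gen S → CF S) (s t : Set (Gen S))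
    (hf : ∀ g ∈ s, f g ∈ Finsupp.supported ℤ ℤ t) :
    ∀ x ∈ Finsupp.supported ℤ ℤ s, Finsupp.lift (CF S) ℤ (Gen S) f x ∈ Finsupp.supported ℤ ℤ t := by
  intro x hx
  rw [Finsupp.lift_apply]
  exact Submodule.sum_mem _ fun g hg => Submodule.smul_mem _ _ (hf g (hx hg))

lemma Dop_single (g : Gen S) (c : ℤ) :
    Dop gr n m nth thn (Finsupp.single g c) = c • Dgen gr n m nth thn g :=
  lift_single _ g c

/-- the identity `thn d = 0` for `gr d = -2`, forced by `D² = 0`. -/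
lemma thn_eq_zero (hD2 : Dop gr n m nth thn ∘ₗ Dop gr n m nth thn = 0)
    (d : S) (hd : gr d = -2) : thn d = 0 := by
  classical
  have h0 := congrArg (fun F => (F (Finsupp.single (theta 0) 1)) (one (-1) d))
    hD2
  simp only [LinearMap.comp_apply, LinearMap.zero_apply, Finsupp.coe_zero, Pi.zero_apply] at h0
  rw [Dop_single, one_smul] at h0
  rw [show Dgen gr n m nth thn (theta 0)
      = ∑ d' : S, Finsupp.single (eta 0 d') (if gr d' = -2 then thn d' else 0) from rfl,
    map_sum] at h0
  simp only [Dop_single] at h0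
  rw [Finsupp.finset_sum_apply] at h0
  have key : ∀ d' : S, ((if gr d' = -2 then thn d' else 0) •
      Dgen gr n m nth thn (eta 0 d')) (one (-1) d)
      = if d' = d then -(if gr d' = -2 then thn d' else 0) else 0 := by
    intro d'
    rw [Finsupp.smul_apply]
    rw [show Dgen gr n m nth thn (eta 0 d')
      = (∑ b : S, Finsupp.single (eta 0 b) (if gr d' - gr b = 1 then n d' b else 0))
        + (∑ c : S, Finsupp.single (one 0 c) (if gr d' - gr c = 2 then m d' c else 0))
        - Finsupp.single (one (0 - 1) d') 1
        + Finsupp.single (theta 0) (if gr d' = 1 then nth d' else 0) from rfl]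
    simp only [Finsupp.add_apply, Finsupp.sub_apply, Finsupp.finset_sum_apply,
      Finsupp.single_apply]
    have h1 : ∀ b : S, (eta 0 b = one (-1) d) = False := by intro b; simp
    have h2 : ∀ c : S, (one 0 c = one (-1) d) = False := by
      intro c; simp only [eq_iff_iff, iff_false]; intro hc
      cases hc
    have h3 : (theta 0 = one (-1) d) = False := by simp
    simp only [h1, h2, h3, if_false, Finset.sum_const_zero]
    have h4 : (one (0-1) d' = one (-1) d) = (d' = d) := by
      simp only [eq_iff_iff]
      constructor
      · intro hc; cases hc; rfl
      · rintro rfl; norm_num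
    rw [h4]
    by_cases hdd : d' = d <;> simp [hdd, mul_ite]
  rw [Finset.sum_congr rfl (fun d' _ => key d')] at h0
  rw [Finset.sum_ite_eq' Finset.univ d] at h0
  simp only [Finset.mem_univ, if_true, hd, if_pos] at h0
  omega

end Aux

section Aux2
variable {S : Type} [Fintype S] (gr : S → ℤ) (n m : S → S → ℤ) (nth thn : S → ℤ)

/-- The contraction on generators: `h(Ω^k ⊗ 1_a) = -Ω^{k+1} ⊗ η_a`. -/
noncomputable def hgen : Gen S → CF S
  | one k a => -Finsupp.single (eta (k+1) a) 1
  | _ => 0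

/-- The contraction as a linear endomorphism. -/
noncomputable def hE : Module.End ℤ (CF S) := Finsupp.lift (CF S) ℤ (Gen S) hgen

/-- The chain map `Φ = 1 - (Dh + hD)`. -/
noncomputable def PhiE : Module.End ℤ (CF S) :=
  1 - ((Dop gr n m nth thn) * hE + hE * (Dop gr n m nth thn))

omit [Fintype S] in
lemma hE_single (g : Gen S) (c : ℤ) : hE (Finsupp.single g c) = c • hgen g :=
  lift_single _ g c

omit [Fintype S] in
lemma hgen_eta (k : ℤ) (a : S) : hgen (eta k a) = 0 := rfl
omit [Fintype S] in
lemma hgen_theta (k : ℤ) : (hgen (theta k) : CF S) = 0 := rfl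
omit [Fintype S] in
lemma hgen_one (k : ℤ) (a : S) : hgen (one k a) = -Finsupp.single (eta (k+1) a) 1 := rfl

lemma Phi_theta (k : ℤ) (c : ℤ) :
    PhiE gr n m nth thn (Finsupp.single (theta k) c) = Finsupp.single (theta k) c := by
  simp only [PhiE, LinearMap.sub_apply, LinearMap.add_apply, Module.End.mul_apply,
    Module.End.one_apply, hE_single, hgen_theta, smul_zero, map_zero, Dop_single]
  rw [show Dgen gr n m nth thn (theta k)
      = ∑ d : S, Finsupp.single (eta k d) (if gr d = -2 then thn d else 0) from rfl]
  rw [Finset.smul_sum, map_sum]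
  simp [hE_single, hgen_eta]

lemma Phi_eta (k : ℤ) (a : S) :
    PhiE gr n m nth thn (Finsupp.single (eta k a) 1)
      = ∑ c : S, Finsupp.single (eta (k+1) c) (if gr a - gr c = 2 then m a c else 0) := by
  simp only [PhiE, LinearMap.sub_apply, LinearMap.add_apply, Module.End.mul_apply,
    Module.End.one_apply, hE_single, hgen_eta, smul_zero, map_zero, Dop_single, one_smul]
  rw [show Dgen gr n m nth thn (eta k a)
      = (∑ b : S, Finsupp.single (eta k b) (if gr a - gr b = 1 then n a b else 0))
        + (∑ c : S, Finsupp.single (one k c) (if gr a - gr c = 2 then m a c else 0))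
        - Finsupp.single (one (k - 1) a) 1
        + Finsupp.single (theta k) (if gr a = 1 then nth a else 0) from rfl]
  simp only [map_add, map_sub, map_sum, hE_single, hgen_eta, hgen_theta, hgen_one,
    smul_zero, smul_neg, Finsupp.smul_single, smul_eq_mul, mul_one, one_smul]
  rw [show k - 1 + 1 = k by ring]
  simp only [Finset.sum_const_zero, Finset.sum_neg_distrib]
  abel

lemma Phi_one (k : ℤ) (a : S) :
    PhiE gr n m nth thn (Finsupp.single (one k a) 1)
      = (∑ c : S, Finsupp.single (one (k+1) c) (if gr a - gr c = 2 then m a c else 0))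
        + Finsupp.single (theta (k+1)) (if gr a = 1 then nth a else 0) := by
  simp only [PhiE, LinearMap.sub_apply, LinearMap.add_apply, Module.End.mul_apply,
    Module.End.one_apply, hE_single, hgen_one, Dop_single, one_smul]
  rw [show Dgen gr n m nth thn (one k a)
      = -∑ b : S, Finsupp.single (one k b) (if gr a - gr b = 1 then n a b else 0) from rfl]
  rw [map_neg, Dop_single, one_smul, map_neg, map_sum]
  rw [show Dgen gr n m nth thn (eta (k+1) a)
      = (∑ b : S, Finsupp.single (eta (k+1) b) (if gr a - gr b = 1 then n a b else 0))
        + (∑ c : S, Finsupp.single (one (k+1) c) (if gr a - gr c = 2 then m a c else 0))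
        - Finsupp.single (one (k + 1 - 1) a) 1
        + Finsupp.single (theta (k+1)) (if gr a = 1 then nth a else 0) from rfl]
  simp only [hE_single, hgen_one, smul_neg, Finsupp.smul_single, smul_eq_mul, mul_one]
  rw [show k + 1 - 1 = k by ring]
  simp only [Finset.sum_neg_distrib, neg_neg]
  abel

end Aux2

section Aux3
variable {S : Type} [Fintype S] (gr : S → ℤ) (n m : S → S → ℤ) (nth thn : S → ℤ)

lemma ring_commute {R : Type*} [Ring R] (D h : R) (hDD : D * D = 0) :
    Commute D (1 - (D * h + h * D)) := by
  have h1 : ∀ x : R, D * (D * x) = 0 := fun x => by rw [← mul_assoc, hDD, zero_mul]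
  have h2 : ∀ x : R, x * D * D = 0 := fun x => by rw [mul_assoc, hDD, mul_zero]
  show _ = _
  simp only [mul_sub, sub_mul, mul_add, add_mul, mul_one, one_mul, h1, h2, zero_add,
    add_zero, mul_assoc]

lemma ring_homotopy {R : Type*} [Ring R] (D h : R) (hDD : D * D = 0) (N : ℕ) :
    1 - (1 - (D * h + h * D)) ^ N
      = D * ((∑ i ∈ Finset.range N, (1 - (D * h + h * D)) ^ i) * h)
        + ((∑ i ∈ Finset.range N, (1 - (D * h + h * D)) ^ i) * h) * D := by
  set Φ := 1 - (D * h + h * D) with hΦ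
  have hc : Commute D Φ := ring_commute D h hDD
  have hs : Commute D (∑ i ∈ Finset.range N, Φ ^ i) :=
    Commute.sum_right _ _ _ fun i _ => hc.pow_right i
  have h1 : D * ((∑ i ∈ Finset.range N, Φ ^ i) * h)
        + ((∑ i ∈ Finset.range N, Φ ^ i) * h) * D
      = (∑ i ∈ Finset.range N, Φ ^ i) * (D * h) + (∑ i ∈ Finset.range N, Φ ^ i) * (h * D) := by
    rw [← mul_assoc D, hs.eq, mul_assoc, mul_assoc]
  rw [h1, ← mul_add]
  have h2 : D * h + h * D = 1 - Φ := by rw [hΦ]; abel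
  rw [h2]
  have h3 := geom_sum_mul Φ N
  rw [← neg_sub Φ 1, mul_neg, h3]; abel

lemma commute_D_Phi (hD2 : Dop gr n m nth thn ∘ₗ Dop gr n m nth thn = 0) :
    Commute (Dop gr n m nth thn) (PhiE gr n m nth thn) := by
  have hDD : Dop gr n m nth thn * Dop gr n m nth thn = 0 := by
    rw [Module.End.mul_eq_comp]; exact hD2
  exact ring_commute _ hE hDD

/-- The homotopy operator `H_N = (∑_{i<N} Φ^i) ∘ h`. -/
noncomputable def HN (N : ℕ) : Module.End ℤ (CF S) :=
  (∑ i ∈ Finset.range N, PhiE gr n m nth thn ^ i) * hE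

lemma homotopy_op (hD2 : Dop gr n m nth thn ∘ₗ Dop gr n m nth thn = 0) (N : ℕ) :
    1 - PhiE gr n m nth thn ^ N
      = Dop gr n m nth thn * HN gr n m nth thn N
        + HN gr n m nth thn N * Dop gr n m nth thn := by
  have hDD : Dop gr n m nth thn * Dop gr n m nth thn = 0 := by
    rw [Module.End.mul_eq_comp]; exact hD2
  exact ring_homotopy _ hE hDD N

lemma homotopy_apply (hD2 : Dop gr n m nth thn ∘ₗ Dop gr n m nth thn = 0) (N : ℕ)
    (x : CF S) :
    x - (PhiE gr n m nth thn ^ N) x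
      = Dop gr n m nth thn (HN gr n m nth thn N x)
        + HN gr n m nth thn N (Dop gr n m nth thn x) := by
  have := congrArg (fun F : Module.End ℤ (CF S) => F x) (homotopy_op gr n m nth thn hD2 N)
  simpa only [LinearMap.sub_apply, Module.End.one_apply, LinearMap.add_apply,
    Module.End.mul_apply] using this

/-- lower bound for `gr`. -/
noncomputable def Gb : ℕ := Finset.univ.sup fun a : S => (-(gr a)).toNat

lemma gr_lb (a : S) : -(Gb gr : ℤ) ≤ gr a := by
  have h1 : (-(gr a)).toNat ≤ Gb gr := Finset.le_sup (f := fun a : S => (-(gr a)).toNat) (Finset.mem_univ a)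
  have h2 : -(gr a) ≤ ((-(gr a)).toNat : ℤ) := Int.self_le_toNat _
  have h3 : (((-(gr a)).toNat : ℕ) : ℤ) ≤ (Gb gr : ℤ) := Int.ofNat_le.mpr h1
  omega

/-- measure for the termination of `Φ`-iterations. -/
noncomputable def mu : Gen S → ℕ
  | theta _ => 0
  | eta _ a => (gr a + Gb gr).toNat + 1
  | one _ a => (gr a + Gb gr).toNat + 1

/-- bound on the measure. -/
noncomputable def Nmax : ℕ := Finset.univ.sup fun a : S => (gr a + Gb gr).toNat + 1

lemma mu_le_Nmax (g : Gen S) : mu gr g ≤ Nmax gr := by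
  cases g with
  | theta k => exact Nat.zero_le _
  | eta k a => exact Finset.le_sup (f := fun a : S => (gr a + Gb gr).toNat + 1) (Finset.mem_univ a)
  | one k a => exact Finset.le_sup (f := fun a : S => (gr a + Gb gr).toNat + 1) (Finset.mem_univ a)

/-- the `θ`-span. -/
noncomputable def Tsub (S : Type) : Submodule ℤ (CF S) :=
  Finsupp.supported ℤ ℤ {g : Gen S | ∃ k : ℤ, g = theta k}

lemma PhiPow_theta (N : ℕ) (k c : ℤ) :
    (PhiE gr n m nth thn ^ N) (Finsupp.single (theta k) c) = Finsupp.single (theta k) c := by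
  induction N with
  | zero => simp
  | succ N ih => rw [pow_succ', Module.End.mul_apply, ih, Phi_theta]

lemma PhiPow_single_mem_T (N : ℕ) : ∀ g : Gen S, mu gr g ≤ N →
    (PhiE gr n m nth thn ^ N) (Finsupp.single g 1) ∈ Tsub S := by
  induction N with
  | zero =>
    intro g hg
    cases g with
    | theta k =>
      rw [pow_zero, Module.End.one_apply]
      exact Finsupp.single_mem_supported ℤ 1 ⟨k, rfl⟩
    | eta k a => simp [mu] at hg
    | one k a => simp [mu] at hg
  | succ N ih =>
    intro g hg
    cases g with
    | theta k =>
      rw [PhiPow_theta]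
      exact Finsupp.single_mem_supported ℤ 1 ⟨k, rfl⟩
    | eta k a =>
      rw [pow_succ, Module.End.mul_apply, Phi_eta, map_sum]
      refine Submodule.sum_mem _ fun c _ => ?_
      by_cases hc : gr a - gr c = 2
      · rw [if_pos hc, show Finsupp.single (eta (k+1) c) (m a c)
            = (m a c) • Finsupp.single (eta (k+1) c) (1:ℤ) by
              rw [Finsupp.smul_single, smul_eq_mul, mul_one], map_smul]
        refine Submodule.smul_mem _ _ (ih (eta (k+1) c) ?_)
        have h1 := gr_lb gr c
        simp only [mu] at hg ⊢
        omega
      · rw [if_neg hc, Finsupp.single_zero, map_zero]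
        exact zero_mem _
    | one k a =>
      rw [pow_succ, Module.End.mul_apply, Phi_one, map_add, map_sum]
      refine add_mem (Submodule.sum_mem _ fun c _ => ?_) ?_
      · by_cases hc : gr a - gr c = 2
        · rw [if_pos hc, show Finsupp.single (one (k+1) c) (m a c)
              = (m a c) • Finsupp.single (one (k+1) c) (1:ℤ) by
                rw [Finsupp.smul_single, smul_eq_mul, mul_one], map_smul]
          refine Submodule.smul_mem _ _ (ih (one (k+1) c) ?_)
          have h1 := gr_lb gr c
          simp only [mu] at hg ⊢
          omega
        · rw [if_neg hc, Finsupp.single_zero, map_zero]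
          exact zero_mem _
      · rw [PhiPow_theta]
        exact Finsupp.single_mem_supported ℤ _ ⟨k+1, rfl⟩

lemma PhiPow_mem_T (x : CF S) :
    (PhiE gr n m nth thn ^ Nmax gr) x ∈ Tsub S := by
  induction x using Finsupp.induction_linear with
  | zero => rw [map_zero]; exact zero_mem _
  | add f g hf hg => rw [map_add]; exact add_mem hf hg
  | single g b =>
    rw [show Finsupp.single g b = b • Finsupp.single g (1:ℤ) by
      rw [Finsupp.smul_single, smul_eq_mul, mul_one], map_smul]
    exact Submodule.smul_mem _ _ (PhiPow_single_mem_T gr n m nth thn _ g (mu_le_Nmax gr g))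

end Aux3

section Aux4
variable {S : Type} [Fintype S] (gr : S → ℤ) (n m : S → S → ℤ) (nth thn : S → ℤ)

lemma Dgen_supported (hth : ∀ d : S, gr d = -2 → thn d = 0) (j : ℤ) (g : Gen S)
    (hg : deg gr g = j) :
    Dgen gr n m nth thn g ∈ Finsupp.supported ℤ ℤ {g' : Gen S | deg gr g' = j - 1} := by
  cases g with
  | eta k a =>
    show (∑ b : S, Finsupp.single (eta k b) (if gr a - gr b = 1 then n a b else 0))
        + (∑ c : S, Finsupp.single (one k c) (if gr a - gr c = 2 then m a c else 0))
        - Finsupp.single (one (k - 1) a) 1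
        + Finsupp.single (theta k) (if gr a = 1 then nth a else 0) ∈ _
    simp only [deg] at hg
    refine add_mem (sub_mem (add_mem (Submodule.sum_mem _ fun b _ => ?_)
      (Submodule.sum_mem _ fun c _ => ?_)) (Finsupp.single_mem_supported ℤ _ ?_))
      ?_
    · by_cases hb : gr a - gr b = 1
      · exact Finsupp.single_mem_supported ℤ _ (by simp only [Set.mem_setOf_eq, deg]; omega)
      · rw [if_neg hb, Finsupp.single_zero]; exact zero_mem _
    · by_cases hc : gr a - gr c = 2
      · exact Finsupp.single_mem_supported ℤ _ (by simp only [Set.mem_setOf_eq, deg]; omega)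
      · rw [if_neg hc, Finsupp.single_zero]; exact zero_mem _
    · simp only [Set.mem_setOf_eq, deg]; omega
    · by_cases ha : gr a = 1
      · exact Finsupp.single_mem_supported ℤ _ (by simp only [Set.mem_setOf_eq, deg]; omega)
      · rw [if_neg ha, Finsupp.single_zero]; exact zero_mem _
  | one k a =>
    show -(∑ b : S, Finsupp.single (one k b) (if gr a - gr b = 1 then n a b else 0)) ∈ _
    simp only [deg] at hg
    refine neg_mem (Submodule.sum_mem _ fun b _ => ?_)
    by_cases hb : gr a - gr b = 1
    · exact Finsupp.single_mem_supported ℤ _ (by simp only [Set.mem_setOf_eq, deg]; omega)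
    · rw [if_neg hb, Finsupp.single_zero]; exact zero_mem _
  | theta k =>
    show (∑ d : S, Finsupp.single (eta k d) (if gr d = -2 then thn d else 0)) ∈ _
    refine Submodule.sum_mem _ fun d _ => ?_
    have : (if gr d = -2 then thn d else 0) = 0 := by
      split
      · exact hth d (by assumption)
      · rfl
    rw [this, Finsupp.single_zero]; exact zero_mem _

lemma D_supported (hth : ∀ d : S, gr d = -2 → thn d = 0) (j : ℤ) (x : CF S)
    (hx : x ∈ Finsupp.supported ℤ ℤ {g : Gen S | deg gr g = j}) :
    Dop gr n m nth thn x ∈ Finsupp.supported ℤ ℤ {g : Gen S | deg gr g = j - 1} :=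
  lift_supported _ _ _ (fun g hg => Dgen_supported gr n m nth thn hth j g hg) x hx

lemma h_supported (j : ℤ) (x : CF S)
    (hx : x ∈ Finsupp.supported ℤ ℤ {g : Gen S | deg gr g = j}) :
    hE x ∈ Finsupp.supported ℤ ℤ {g : Gen S | deg gr g = j + 1} := by
  refine lift_supported _ _ _ (fun g hg => ?_) x hx
  cases g with
  | eta k a => rw [hgen_eta]; exact zero_mem _
  | theta k => rw [hgen_theta]; exact zero_mem _
  | one k a =>
    rw [hgen_one]
    refine neg_mem (Finsupp.single_mem_supported ℤ _ ?_)
    simp only [Set.mem_setOf_eq, deg] at hg ⊢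
    omega

lemma Phi_supported (hth : ∀ d : S, gr d = -2 → thn d = 0) (j : ℤ) (x : CF S)
    (hx : x ∈ Finsupp.supported ℤ ℤ {g : Gen S | deg gr g = j}) :
    PhiE gr n m nth thn x ∈ Finsupp.supported ℤ ℤ {g : Gen S | deg gr g = j} := by
  have e : PhiE gr n m nth thn x
      = x - (Dop gr n m nth thn (hE x) + hE (Dop gr n m nth thn x)) := by
    simp only [PhiE, LinearMap.sub_apply, Module.End.one_apply, LinearMap.add_apply,
      Module.End.mul_apply]
  rw [e]
  refine sub_mem hx (add_mem ?_ ?_)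
  · have h1 := D_supported gr n m nth thn hth (j+1) _ (h_supported gr j x hx)
    simpa using h1
  · have h1 := h_supported gr (j-1) _ (D_supported gr n m nth thn hth j x hx)
    simpa using h1

lemma PhiPow_supported (hth : ∀ d : S, gr d = -2 → thn d = 0) (N : ℕ) (j : ℤ) (x : CF S)
    (hx : x ∈ Finsupp.supported ℤ ℤ {g : Gen S | deg gr g = j}) :
    (PhiE gr n m nth thn ^ N) x ∈ Finsupp.supported ℤ ℤ {g : Gen S | deg gr g = j} := by
  induction N with
  | zero => simpa using hx
  | succ N ih =>
    rw [pow_succ', Module.End.mul_apply]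
    exact Phi_supported gr n m nth thn hth j _ ih

lemma HN_supported (hth : ∀ d : S, gr d = -2 → thn d = 0) (N : ℕ) (j : ℤ) (x : CF S)
    (hx : x ∈ Finsupp.supported ℤ ℤ {g : Gen S | deg gr g = j}) :
    HN gr n m nth thn N x ∈ Finsupp.supported ℤ ℤ {g : Gen S | deg gr g = j + 1} := by
  rw [HN, Module.End.mul_apply, LinearMap.sum_apply]
  exact Submodule.sum_mem _ fun i _ =>
    PhiPow_supported gr n m nth thn hth i (j+1) _ (h_supported gr j x hx)

omit [Fintype S] in
lemma supported_disjoint_eq_zero (s t : Set (Gen S)) (x : CF S)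
    (hx1 : x ∈ Finsupp.supported ℤ ℤ s) (hx2 : x ∈ Finsupp.supported ℤ ℤ t)
    (h : ∀ g, g ∈ s → g ∉ t) : x = 0 := by
  ext g
  by_cases hg : g ∈ s
  · exact (Finsupp.mem_supported' (R := ℤ) x).mp hx2 g (h g hg)
  · exact (Finsupp.mem_supported' (R := ℤ) x).mp hx1 g hg

lemma mem_T_deg_eq (k : ℤ) (x : CF S) (hx1 : x ∈ Tsub S)
    (hx2 : x ∈ Finsupp.supported ℤ ℤ {g : Gen S | deg gr g = 2 * k}) :
    x = Finsupp.single (theta k) (x (theta k)) := by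
  ext g
  by_cases hg : g = theta k
  · subst hg; rw [Finsupp.single_eq_same]
  · rw [Finsupp.single_eq_of_ne hg]
    by_cases hth : ∃ k' : ℤ, g = theta k'
    · obtain ⟨k', rfl⟩ := hth
      refine (Finsupp.mem_supported' (R := ℤ) x).mp hx2 _ ?_
      have hkk : k' ≠ k := fun h => hg (by rw [h])
      simp only [Set.mem_setOf_eq, deg]
      omega
    · exact (Finsupp.mem_supported' (R := ℤ) x).mp hx1 _ hth

end Aux4
/-- assuming the coefficient identities (so that `D ∘ D = 0`), the
homology of `CF^{SW,∞}` is `ℤ[Ω, Ω⁻¹]`: it vanishes in odd degrees, and in each even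
degree `2k` it is an infinite cyclic group generated by a cycle whose `Ω^k ⊗ 1_θ`
coordinate equals `1` (the class represented by `Ω^k ⊗ 1_θ`). -/
theorem homology_CFinfty (gr : S → ℤ) (n m : S → S → ℤ) (nth thn : S → ℤ)
    (hnn : ∀ a c : S, gr a - gr c = 2 →
      (∑ b : S, (if gr a - gr b = 1 then n a b * n b c else 0)) = 0)
    (hntheta : ∀ a : S, gr a = 2 →
      (∑ b : S, (if gr a - gr b = 1 then n a b * nth b else 0)) = 0)
    (hnm : ∀ a d : S, gr a - gr d = 3 → ¬(gr a = 1 ∧ gr d = -2) →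
      (∑ c : S, (if gr a - gr c = 1 then n a c * m c d else 0))
        - (∑ c : S, (if gr c - gr d = 1 then m a c * n c d else 0)) = 0)
    (hnmtheta : ∀ a d : S, gr a = 1 → gr d = -2 →
      (∑ c : S, (if gr c = 0 then n a c * m c d else 0)) + nth a * thn d
        - (∑ c : S, (if gr c = -1 then m a c * n c d else 0)) = 0)
    (hD2 : Dop gr n m nth thn ∘ₗ Dop gr n m nth thn = 0) :
    (∀ j : ℤ, Odd j → Zc gr n m nth thn j ≤ Bc gr n m nth thn j) ∧
    (∀ k : ℤ, ∃ z : CF S, z ∈ Zc gr n m nth thn (2 * k) ∧ z (Gen.theta k) = 1 ∧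
      (∀ w ∈ Zc gr n m nth thn (2 * k), ∃ c : ℤ, w - c • z ∈ Bc gr n m nth thn (2 * k)) ∧
      (∀ c : ℤ, c • z ∈ Bc gr n m nth thn (2 * k) → c = 0)) := by
  classical
  have hth : ∀ d : S, gr d = -2 → thn d = 0 := thn_eq_zero gr n m nth thn hD2
  constructor
  · -- odd degrees
    intro j hj z hz
    obtain ⟨hz1, hz2⟩ := Submodule.mem_inf.mp hz
    rw [LinearMap.mem_ker] at hz2
    have h1 := homotopy_apply gr n m nth thn hD2 (Nmax gr) z
    rw [hz2, map_zero, add_zero] at h1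
    have h2 : (PhiE gr n m nth thn ^ Nmax gr) z = 0 := by
      refine supported_disjoint_eq_zero {g : Gen S | ∃ k : ℤ, g = theta k}
        {g : Gen S | deg gr g = j} _ (PhiPow_mem_T gr n m nth thn z)
        (PhiPow_supported gr n m nth thn hth (Nmax gr) j z hz1) ?_
      rintro g ⟨k, rfl⟩ hg
      simp only [Set.mem_setOf_eq, deg] at hg
      obtain ⟨l, hl⟩ := hj
      omega
    rw [h2, sub_zero] at h1
    exact ⟨HN gr n m nth thn (Nmax gr) z,
      HN_supported gr n m nth thn hth (Nmax gr) j z hz1, h1.symm⟩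
  · intro k
    have hDzk : Dop gr n m nth thn (Finsupp.single (theta k) (1:ℤ)) = 0 := by
      rw [Dop_single, one_smul]
      show (∑ d : S, Finsupp.single (eta k d) (if gr d = -2 then thn d else 0)) = 0
      refine Finset.sum_eq_zero fun d _ => ?_
      have : (if gr d = -2 then thn d else 0) = 0 := by
        split
        · exact hth d (by assumption)
        · rfl
      rw [this, Finsupp.single_zero]
    have hzZ : Finsupp.single (theta k) (1:ℤ) ∈ Zc gr n m nth thn (2*k) :=
      Submodule.mem_inf.mpr ⟨Finsupp.single_mem_supported ℤ 1 rfl, LinearMap.mem_ker.mpr hDzk⟩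
    refine ⟨Finsupp.single (theta k) 1, hzZ, Finsupp.single_eq_same, ?_, ?_⟩
    · intro w hw
      obtain ⟨hw1, hw2⟩ := Submodule.mem_inf.mp hw
      rw [LinearMap.mem_ker] at hw2
      set c : ℤ := ((PhiE gr n m nth thn ^ Nmax gr) w) (theta k) with hc
      have hPweq : (PhiE gr n m nth thn ^ Nmax gr) w = Finsupp.single (theta k) c :=
        mem_T_deg_eq gr k _ (PhiPow_mem_T gr n m nth thn w)
          (PhiPow_supported gr n m nth thn hth (Nmax gr) (2*k) w hw1)
      refine ⟨c, ?_⟩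
      have h1 := homotopy_apply gr n m nth thn hD2 (Nmax gr)
        (w - c • Finsupp.single (theta k) 1)
      have hDwz : Dop gr n m nth thn (w - c • Finsupp.single (theta k) 1) = 0 := by
        rw [map_sub, map_smul, hw2, hDzk, smul_zero, sub_zero]
      have hPwz : (PhiE gr n m nth thn ^ Nmax gr)
          (w - c • Finsupp.single (theta k) 1) = 0 := by
        rw [map_sub, map_smul, PhiPow_theta, hPweq, Finsupp.smul_single, smul_eq_mul,
          mul_one, sub_self]
      rw [hDwz, map_zero, add_zero, hPwz, sub_zero] at h1
      refine ⟨HN gr n m nth thn (Nmax gr) (w - c • Finsupp.single (theta k) 1), ?_, h1.symm⟩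
      exact HN_supported gr n m nth thn hth (Nmax gr) (2*k) _
        (sub_mem hw1 (Submodule.smul_mem _ _ (Finsupp.single_mem_supported ℤ 1 rfl)))
    · intro c hc
      obtain ⟨y, hy1, hy2⟩ := hc
      have hcomm := ((commute_D_Phi gr n m nth thn hD2).pow_right (Nmax gr)).eq
      have h1 : Dop gr n m nth thn ((PhiE gr n m nth thn ^ Nmax gr) y)
          = (PhiE gr n m nth thn ^ Nmax gr) (c • Finsupp.single (theta k) 1) := by
        rw [← hy2]
        have := congrArg (fun F : Module.End ℤ (CF S) => F y) hcomm
        simpa only [Module.End.mul_apply] using this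
      have h2 : (PhiE gr n m nth thn ^ Nmax gr) y = 0 := by
        refine supported_disjoint_eq_zero {g : Gen S | ∃ k' : ℤ, g = theta k'}
          {g : Gen S | deg gr g = 2*k + 1} _ (PhiPow_mem_T gr n m nth thn y)
          (PhiPow_supported gr n m nth thn hth (Nmax gr) (2*k+1) y hy1) ?_
        rintro g ⟨k', rfl⟩ hg
        simp only [Set.mem_setOf_eq, deg] at hg
        omega
      rw [h2, map_zero, map_smul, PhiPow_theta] at h1
      have h3 := congrArg (fun v : CF S => v (theta k)) h1
      simpa using h3.symm

end Gen
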